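/- Spector's bar recursion SBR is definable from the dependent explicitly controlled product EPS: given ω : (ℕ → X) → ℕ and selection functions ε_s : (X → (ℕ → X)) → X for lists s, taking R = (ℕ → X) × ℕ, l = second projection, q^ω α = (α, ω α), and ε̃_s p = ε_s (fun x => (p x).1), if EPS satisfies the dependent product equation then SBR defined by SBR s = s ++ EPS s ((q^ω)_s) satisfies Spector's equation: SBR s = s overwritten on the zero sequence if ω (s overwritten on zero) < length s, and SBR s = SBR (s ++ [c]) otherwise, where c = ε_s (fun x => SBR (s ++ [x])). -/

import Mathlib

/-- Prepend an element to an infinite sequence. -/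
def seqCons {X : Type*} (x : X) (α : ℕ → X) : ℕ → X
  | 0 => x
  | n + 1 => α n

/-- Overwrite the initial segment of an infinite sequence with a finite list. -/
def listApp {X : Type*} (s : List X) (α : ℕ → X) : ℕ → X :=
  fun i => if h : i < s.length then s.get ⟨i, h⟩ else α (i - s.length)

/-- The list of the first `n` values of an infinite sequence. -/
def firstN {X : Type*} (α : ℕ → X) (n : ℕ) : List X := (List.range n).map α

lemma listApp_append_cons {X : Type*} (s : List X) (x : X) (α : ℕ → X) :
    listApp (s ++ [x]) α = listApp s (seqCons x α) := by
  funext i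
  simp only [listApp, List.length_append, List.length_singleton]
  rcases lt_trichotomy i s.length with h | h | h
  · rw [dif_pos (by omega), dif_pos h]
    simp [List.get_eq_getElem, List.getElem_append_left h]
  · subst h
    rw [dif_pos (by omega), dif_neg (by omega)]
    simp [List.get_eq_getElem, List.getElem_concat_length, seqCons]
  · rw [dif_neg (by omega), dif_neg (by omega)]
    obtain ⟨k, hk⟩ : ∃ k, i - s.length = k + 1 := ⟨i - s.length - 1, by omega⟩
    rw [hk]
    have : i - (s.length + 1) = k := by omega
    rw [this, seqCons]

theorem stmt9 {X : Type*} (z : X) (ω : (ℕ → X) → ℕ)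
    (ε : List X → (X → (ℕ → X)) → X)
    (EPS : List X → ((ℕ → X) → (ℕ → X) × ℕ) → (ℕ → X))
    (hEPS : ∀ (s : List X) (q : (ℕ → X) → (ℕ → X) × ℕ),
      EPS s q =
        if (q (fun _ => z)).2 < s.length then (fun _ => z)
        else
          let εt : List X → (X → (ℕ → X) × ℕ) → X := fun s p => ε s (fun x => (p x).1)
          let c := εt s (fun x => q (seqCons x (EPS (s ++ [x]) (fun α => q (seqCons x α)))))
          seqCons c (EPS (s ++ [c]) (fun α => q (seqCons c α))))
    (SBR : List X → (ℕ → X))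
    (hSBR : ∀ s : List X,
      SBR s = listApp s (EPS s (fun α => (listApp s α, ω (listApp s α))))) :
    ∀ s : List X,
      SBR s =
        if ω (listApp s (fun _ => z)) < s.length then listApp s (fun _ => z)
        else SBR (s ++ [ε s (fun x => SBR (s ++ [x]))]) := by
  intro s
  set q : (ℕ → X) → (ℕ → X) × ℕ := fun α => (listApp s α, ω (listApp s α)) with hq
  have hq' : ∀ x : X, (fun α => (listApp (s ++ [x]) α, ω (listApp (s ++ [x]) α)))
      = fun α => q (seqCons x α) := by
    intro x; funext α; simp [hq, listApp_append_cons]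
  have hSBRx : ∀ x : X,
      SBR (s ++ [x]) = listApp s (seqCons x (EPS (s ++ [x]) (fun α => q (seqCons x α)))) := by
    intro x
    rw [hSBR (s ++ [x]), hq' x, listApp_append_cons]
  have h := hEPS s q
  by_cases hlt : ω (listApp s (fun _ => z)) < s.length
  · rw [if_pos hlt]
    rw [hSBR s, h, if_pos (by simpa [hq] using hlt)]
  · rw [if_neg hlt]
    rw [hSBR s, h, if_neg (by simpa [hq] using hlt)]
    simp only
    have hc : (fun x => (q (seqCons x (EPS (s ++ [x]) (fun α => q (seqCons x α))))).1)
        = fun x => SBR (s ++ [x]) := by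
      funext x; rw [hSBRx x]
    rw [hc]
    exact (hSBRx _).symm
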